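/- Consider a qudit in the maximally mixed state ρ_O = (1/d_O)·1 coupled to a harmonic-oscillator reservoir (infinite ladder with level spacing ω, ground energy 0) in a Gibbs state at inverse temperature β. Under the optimal full-erasure unitary (which maps the joint state to |φ_1⟩⟨φ_1| ⊗ ρ'_R with ρ'_R obtained by grouping the Gibbs probabilities into blocks of size d_O), the heat dissipated is ΔQ = (ω(d_O − 1)/2)·coth(βω/2), and this strictly exceeds (d_O − 1)/β. -/

import Mathlib

open Finset Real

/-- Hyperbolic cotangent. -/
noncomputable def coth (x : ℝ) : ℝ := Real.cosh x / Real.sinh x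

private lemma sinh_lt_mul_cosh {x : ℝ} (hx : 0 < x) : Real.sinh x < x * Real.cosh x := by
  have mono : StrictMonoOn (fun y => y * Real.cosh y - Real.sinh y) (Set.Ici 0) := by
    apply strictMonoOn_of_deriv_pos (convex_Ici 0)
    · exact ((continuous_id.mul Real.continuous_cosh).sub Real.continuous_sinh).continuousOn
    · intro y hy
      rw [interior_Ici, Set.mem_Ioi] at hy
      have h1 : HasDerivAt (fun y => y * Real.cosh y - Real.sinh y)
          (1 * Real.cosh y + y * Real.sinh y - Real.cosh y) y :=
        ((hasDerivAt_id y).mul (Real.hasDerivAt_cosh y)).sub (Real.hasDerivAt_sinh y)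
      rw [h1.deriv]
      have hs : 0 < Real.sinh y := Real.sinh_pos_iff.2 hy
      nlinarith
  have h := mono Set.self_mem_Ici (Set.mem_Ici.2 hx.le) hx
  simp only [Real.cosh_zero, Real.sinh_zero, mul_zero, zero_mul, sub_zero] at h
  linarith

/-- **Heat of full erasure of a maximally mixed qudit with a harmonic
oscillator reservoir**: with 0-based reservoir levels `λ_k = ωk` and Gibbs
probabilities `r_m = e^{-βωm}(1 − e^{-βω})`, the heat
`ΔQ = (1/d_O)Σ_m r_m Σ_{j<d_O} λ_{d_O(m+1)−j−1} − Σ_m r_m λ_m` equals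
`(ω(d_O−1)/2)·coth(βω/2)` and strictly exceeds `(d_O−1)/β`. -/
theorem qudit_erasure_heat_harmonic_oscillator (dO : ℕ) (hdO : 2 ≤ dO)
    (β ω : ℝ) (hβ : 0 < β) (hω : 0 < ω)
    (r : ℕ → ℝ) (hr : ∀ m, r m = Real.exp (-(β * ω) * m) * (1 - Real.exp (-(β * ω))))
    (ΔQ : ℝ)
    (hΔQ : ΔQ = (1 / (dO : ℝ)) *
        (∑' m : ℕ, r m * ∑ j ∈ Finset.range dO, ω * ((dO : ℝ) * (m + 1) - j - 1))
      - ∑' m : ℕ, r m * (ω * m)) :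
    ΔQ = ω * ((dO : ℝ) - 1) / 2 * coth (β * ω / 2) ∧
      ((dO : ℝ) - 1) / β < ΔQ := by
  set q : ℝ := Real.exp (-(β * ω)) with hq_def
  have hq0 : 0 < q := Real.exp_pos _
  have hq1 : q < 1 := by
    rw [hq_def]; apply Real.exp_lt_one_iff.2; nlinarith
  have h1q : (0:ℝ) < 1 - q := by linarith
  have hdO1 : (1:ℝ) ≤ (dO:ℝ) - 1 := by
    have : (2:ℝ) ≤ (dO:ℝ) := by exact_mod_cast hdO
    linarith
  have hdO0 : (0:ℝ) < (dO:ℝ) := by linarith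
  have hrq : ∀ m : ℕ, r m = q ^ m * (1 - q) := by
    intro m
    rw [hr m, hq_def, ← Real.exp_nat_mul]
    ring_nf
  -- geometric sums
  have hS0 : HasSum (fun m : ℕ => q ^ m) (1 - q)⁻¹ :=
    hasSum_geometric_of_lt_one hq0.le hq1
  have hS1 : HasSum (fun m : ℕ => (m : ℝ) * q ^ m) (q / (1 - q) ^ 2) := by
    have := hasSum_coe_mul_geometric_of_norm_lt_one (𝕜 := ℝ) (r := q)
      (by rwa [Real.norm_eq_abs, abs_of_pos hq0])
    exact this
  -- inner finite sum
  have hgauss : ∀ n : ℕ, ∑ j ∈ Finset.range n, (j:ℝ) = n * (n - 1) / 2 := by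
    intro n
    induction n with
    | zero => simp
    | succ k ih => rw [Finset.sum_range_succ, ih]; push_cast; ring
  set c : ℝ := (dO:ℝ) * ((dO:ℝ) - 1) / 2 with hc_def
  have hinner : ∀ m : ℕ, ∑ j ∈ Finset.range dO, ω * ((dO : ℝ) * (m + 1) - j - 1)
      = ω * ((dO:ℝ)^2 * m + c) := by
    intro m
    have : ∀ j ∈ Finset.range dO, ω * ((dO : ℝ) * (m + 1) - j - 1)
        = ω * ((dO : ℝ) * (m + 1) - 1) - ω * (j:ℝ) := by
      intro j _; ring
    rw [Finset.sum_congr rfl this, Finset.sum_sub_distrib, Finset.sum_const,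
      Finset.card_range, ← Finset.mul_sum, hgauss, hc_def]
    ring
  -- the two tsums
  have hA : (∑' m : ℕ, r m * (ω * m)) = ω * q / (1 - q) := by
    have h : HasSum (fun m : ℕ => r m * (ω * m)) ((ω * (1 - q)) * (q / (1 - q) ^ 2)) := by
      refine (hS1.mul_left (ω * (1 - q))).congr_fun fun m => ?_
      rw [hrq m]; ring
    rw [h.tsum_eq]; field_simp
  have hT : (∑' m : ℕ, r m * ∑ j ∈ Finset.range dO, ω * ((dO : ℝ) * (m + 1) - j - 1))
      = (ω * (dO:ℝ)^2 * (1 - q)) * (q / (1 - q) ^ 2) + (ω * c * (1 - q)) * (1 - q)⁻¹ := by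
    have h : HasSum (fun m : ℕ => r m * ∑ j ∈ Finset.range dO, ω * ((dO : ℝ) * (m + 1) - j - 1))
        ((ω * (dO:ℝ)^2 * (1 - q)) * (q / (1 - q) ^ 2) + (ω * c * (1 - q)) * (1 - q)⁻¹) := by
      refine ((hS1.mul_left (ω * (dO:ℝ)^2 * (1 - q))).add
        (hS0.mul_left (ω * c * (1 - q)))).congr_fun fun m => ?_
      rw [hinner m, hrq m]; ring
    exact h.tsum_eq
  have hΔQval : ΔQ = ω * ((dO:ℝ) - 1) / 2 * ((1 + q) / (1 - q)) := by
    rw [hΔQ, hA, hT, hc_def]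
    field_simp
    ring
  -- coth identity
  have ht : 0 < β * ω / 2 := by positivity
  have hsinh : 0 < Real.sinh (β * ω / 2) := Real.sinh_pos_iff.2 ht
  have hcosh : 0 < Real.cosh (β * ω / 2) := Real.cosh_pos _
  have hcoth : coth (β * ω / 2) = (1 + q) / (1 - q) := by
    have hexp : Real.exp (-(β * ω / 2)) = (Real.exp (β * ω / 2))⁻¹ := Real.exp_neg _
    have hqe : q = (Real.exp (β * ω / 2))⁻¹ * (Real.exp (β * ω / 2))⁻¹ := by
      rw [← hexp, hq_def, ← Real.exp_add]; congr 1; ring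
    have hE : (0:ℝ) < Real.exp (β * ω / 2) := Real.exp_pos _
    rw [coth, div_eq_div_iff hsinh.ne' h1q.ne']
    rw [Real.cosh_eq, Real.sinh_eq, hqe, hexp]
    have hEne : Real.exp (β * ω / 2) ≠ 0 := hE.ne'
    field_simp
  constructor
  · rw [hΔQval, hcoth]
  · rw [hΔQval, ← hcoth, coth]
    have key : Real.sinh (β * ω / 2) < (β * ω / 2) * Real.cosh (β * ω / 2) :=
      sinh_lt_mul_cosh ht
    have h2 : 1 / (β * ω / 2) < Real.cosh (β * ω / 2) / Real.sinh (β * ω / 2) := by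
      rw [div_lt_div_iff₀ ht hsinh]; linarith
    calc ((dO : ℝ) - 1) / β = ω * ((dO:ℝ) - 1) / 2 * (1 / (β * ω / 2)) := by
          field_simp
      _ < ω * ((dO:ℝ) - 1) / 2 * (Real.cosh (β * ω / 2) / Real.sinh (β * ω / 2)) := by
          apply mul_lt_mul_of_pos_left h2; positivity
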